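/- For all real x ∈ [0,1] and all integers n ≥ 3, one has 1 − I(1 − x²; (n−1)/2, 1/2) ≤ 2e · (n−1) · x · B((n−1)/2, 1/2), where e is Euler's number. -/

import Mathlib

open intervalIntegral MeasureTheory


lemma g_integrable : IntervalIntegrable (fun t : ℝ => (1 - t) ^ (-(1/2) : ℝ)) volume 0 1 := by
  have h := (intervalIntegrable_rpow' (by norm_num : (-1:ℝ) < -(1/2)) (a := 0) (b := 1)).comp_sub_left 1
  norm_num at h
  exact h.symm

lemma g_integral (c : ℝ) : ∫ t in c..1, (1 - t) ^ (-(1/2) : ℝ) = 2 * (1 - c) ^ ((1:ℝ)/2) := by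
  rw [intervalIntegral.integral_comp_sub_left (fun u => u ^ (-(1/2):ℝ)) 1]
  rw [integral_rpow (Or.inl (by norm_num))]
  norm_num [Real.zero_rpow]
  ring

lemma f_integrable (a : ℝ) (ha : 1 ≤ a) :
    IntervalIntegrable (fun t : ℝ => t ^ (a - 1) * (1 - t) ^ (-(1/2) : ℝ)) volume 0 1 := by
  apply g_integrable.mono_fun'
  · apply Measurable.aestronglyMeasurable
    fun_prop
  · rw [Set.uIoc_of_le (zero_le_one (α := ℝ))]
    filter_upwards [ae_restrict_mem measurableSet_Ioc] with t ht
    have h1 : 0 ≤ t ^ (a - 1) := Real.rpow_nonneg ht.1.le _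
    have h2 : 0 ≤ (1 - t) ^ (-(1/2) : ℝ) := Real.rpow_nonneg (by linarith [ht.2]) _
    have h3 : t ^ (a - 1) ≤ 1 := Real.rpow_le_one ht.1.le ht.2 (by linarith)
    simp only [Real.norm_eq_abs, abs_of_nonneg (mul_nonneg h1 h2)]
    nlinarith

/-- The Beta function `B(a,b) = ∫_0^1 t^{a-1} (1-t)^{b-1} dt`. -/
noncomputable def betaFn (a b : ℝ) : ℝ :=
  ∫ t in (0:ℝ)..1, t ^ (a - 1) * (1 - t) ^ (b - 1)

/-- The regularized incomplete Beta function
`I(x; a, b) = (1/B(a,b)) ∫_0^x t^{a-1} (1-t)^{b-1} dt`. -/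
noncomputable def regIncompleteBeta (x a b : ℝ) : ℝ :=
  (∫ t in (0:ℝ)..x, t ^ (a - 1) * (1 - t) ^ (b - 1)) / betaFn a b

set_option maxHeartbeats 1000000 in
/-- For all `x ∈ [0,1]` and integers `n ≥ 3`,
`1 − I(1 − x²; (n−1)/2, 1/2) ≤ 2e · (n−1) · x · B((n−1)/2, 1/2)`. -/
theorem one_sub_regIncompleteBeta_le (x : ℝ) (hx : x ∈ Set.Icc (0:ℝ) 1)
    (n : ℕ) (hn : 3 ≤ n) :
    1 - regIncompleteBeta (1 - x ^ 2) (((n:ℝ) - 1) / 2) (1 / 2)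
      ≤ 2 * Real.exp 1 * ((n:ℝ) - 1) * x * betaFn (((n:ℝ) - 1) / 2) (1 / 2) := by
  obtain ⟨hx0, hx1⟩ := hx
  have hn3 : (3:ℝ) ≤ (n:ℝ) := by exact_mod_cast hn
  set a : ℝ := ((n:ℝ) - 1) / 2 with ha_def
  clear_value a
  have ha : 1 ≤ a := by rw [ha_def]; linarith
  have ha0 : 0 < a := by linarith
  have hbe : ((1:ℝ)/2 - 1) = -(1/2) := by norm_num
  simp only [regIncompleteBeta, betaFn, hbe]
  set c : ℝ := 1 - x ^ 2 with hc_def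
  clear_value c
  have hc0 : 0 ≤ c := by rw [hc_def]; nlinarith
  have hc1 : c ≤ 1 := by rw [hc_def]; nlinarith
  set B : ℝ := ∫ t in (0:ℝ)..1, t ^ (a - 1) * (1 - t) ^ (-(1/2) : ℝ) with hB_def
  clear_value B
  have hfi := f_integrable a ha
  have hmem : ∀ y : ℝ, 0 ≤ y → y ≤ 1 → y ∈ Set.uIcc (0:ℝ) 1 := by
    intro y h1 h2
    rw [Set.uIcc_of_le (zero_le_one (α := ℝ))]
    exact ⟨h1, h2⟩
  have hsub : ∀ y z : ℝ, 0 ≤ y → y ≤ 1 → 0 ≤ z → z ≤ 1 →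
      IntervalIntegrable (fun t : ℝ => t ^ (a - 1) * (1 - t) ^ (-(1/2) : ℝ)) volume y z :=
    fun y z h1 h2 h3 h4 =>
      hfi.mono_set (Set.uIcc_subset_uIcc (hmem y h1 h2) (hmem z h3 h4))
  have hgsub : ∀ y z : ℝ, 0 ≤ y → y ≤ 1 → 0 ≤ z → z ≤ 1 →
      IntervalIntegrable (fun t : ℝ => (1 - t) ^ (-(1/2) : ℝ)) volume y z :=
    fun y z h1 h2 h3 h4 =>
      g_integrable.mono_set (Set.uIcc_subset_uIcc (hmem y h1 h2) (hmem z h3 h4))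
  -- split the integral
  have hsplit : (∫ t in (0:ℝ)..c, t ^ (a - 1) * (1 - t) ^ (-(1/2) : ℝ))
      + (∫ t in c..1, t ^ (a - 1) * (1 - t) ^ (-(1/2) : ℝ)) = B :=
    (integral_add_adjacent_intervals (hsub 0 c le_rfl zero_le_one hc0 hc1)
      (hsub c 1 hc0 hc1 zero_le_one le_rfl)).trans hB_def.symm
  -- lower bound for B
  set s : ℝ := 1 - a⁻¹ with hs_def
  clear_value s
  have hainv : a⁻¹ ≤ 1 := by
    rw [inv_le_one_iff₀]; right; exact ha
  have hainv0 : 0 < a⁻¹ := inv_pos.2 ha0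
  have hs0 : 0 ≤ s := by rw [hs_def]; linarith
  have hs1 : s ≤ 1 := by rw [hs_def]; linarith
  have hspow : Real.exp (-1) ≤ s ^ (a - 1) := by
    rcases eq_or_lt_of_le ha with h | h
    · rw [← h]
      norm_num
    · have hspos : 0 < s := by
        rw [hs_def]
        have : a⁻¹ < 1 := by rw [inv_lt_one_iff₀]; right; exact h
        linarith
      rw [Real.rpow_def_of_pos hspos, Real.exp_le_exp]
      have h1 : Real.log s⁻¹ ≤ s⁻¹ - 1 := Real.log_le_sub_one_of_pos (inv_pos.2 hspos)
      rw [Real.log_inv] at h1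
      have ha1ne : a - 1 ≠ 0 := ne_of_gt (by linarith)
      have hsinv : s⁻¹ = a / (a - 1) := by
        rw [hs_def]
        rw [show (1 - a⁻¹) = (a - 1) / a by field_simp, inv_div]
      rw [hsinv] at h1
      have h2 : -(1 / (a - 1)) ≤ Real.log s := by
        have he : a / (a - 1) - 1 = 1 / (a - 1) := by field_simp; ring
        linarith [he ▸ h1]
      have h3 : 0 < a - 1 := by linarith
      have := mul_le_mul_of_nonneg_right h2 h3.le
      calc (-1 : ℝ) = -(1 / (a - 1)) * (a - 1) := by field_simp
        _ ≤ Real.log s * (a - 1) := this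
  have hptlow : ∀ t ∈ Set.Icc s 1,
      Real.exp (-1) * (1 - t) ^ (-(1/2) : ℝ) ≤ t ^ (a - 1) * (1 - t) ^ (-(1/2) : ℝ) := by
    intro t ht
    have h2 : 0 ≤ (1 - t) ^ (-(1/2) : ℝ) := Real.rpow_nonneg (by linarith [ht.2]) _
    have h3 : s ^ (a - 1) ≤ t ^ (a - 1) := Real.rpow_le_rpow hs0 ht.1 (by linarith)
    exact mul_le_mul_of_nonneg_right (hspow.trans h3) h2
  have hlow1 : (∫ t in s..1, Real.exp (-1) * (1 - t) ^ (-(1/2) : ℝ))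
      ≤ ∫ t in s..1, t ^ (a - 1) * (1 - t) ^ (-(1/2) : ℝ) :=
    integral_mono_on hs1 ((hgsub s 1 hs0 hs1 zero_le_one le_rfl).const_mul _)
      (hsub s 1 hs0 hs1 zero_le_one le_rfl) hptlow
  have hlowval : (∫ t in s..1, Real.exp (-1) * (1 - t) ^ (-(1/2) : ℝ))
      = Real.exp (-1) * (2 * (a⁻¹) ^ ((1:ℝ)/2)) := by
    rw [intervalIntegral.integral_const_mul, g_integral]
    congr 2
    rw [hs_def]; ring
  have hnn : (0:ℝ) ≤ ∫ t in (0:ℝ)..s, t ^ (a - 1) * (1 - t) ^ (-(1/2) : ℝ) := by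
    apply intervalIntegral.integral_nonneg hs0
    intro u hu
    exact mul_nonneg (Real.rpow_nonneg hu.1 _) (Real.rpow_nonneg (by linarith [hu.2, hs1]) _)
  have hsplit2 : (∫ t in (0:ℝ)..s, t ^ (a - 1) * (1 - t) ^ (-(1/2) : ℝ))
      + (∫ t in s..1, t ^ (a - 1) * (1 - t) ^ (-(1/2) : ℝ)) = B :=
    (integral_add_adjacent_intervals (hsub 0 s le_rfl zero_le_one hs0 hs1)
      (hsub s 1 hs0 hs1 zero_le_one le_rfl)).trans hB_def.symm
  have hBlow : Real.exp (-1) * (2 * (a⁻¹) ^ ((1:ℝ)/2)) ≤ B := by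
    rw [← hlowval]
    linarith [hlow1]
  have hL0 : 0 < Real.exp (-1) * (2 * (a⁻¹) ^ ((1:ℝ)/2)) := by positivity
  have hB0 : 0 < B := lt_of_lt_of_le hL0 hBlow
  have hsq : ((a⁻¹) ^ ((1:ℝ)/2)) ^ 2 = a⁻¹ := by
    rw [← Real.rpow_natCast ((a⁻¹) ^ ((1:ℝ)/2)) 2, ← Real.rpow_mul hainv0.le]
    norm_num
  have key : 1 ≤ Real.exp 1 * ((n:ℝ) - 1) * B ^ 2 := by
    have h2a : (n:ℝ) - 1 = 2 * a := by rw [ha_def]; ring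
    have hBsq : (Real.exp (-1) * (2 * (a⁻¹) ^ ((1:ℝ)/2))) ^ 2 ≤ B ^ 2 :=
      pow_le_pow_left₀ hL0.le hBlow 2
    have hepos := Real.exp_pos 1
    have hee : Real.exp 1 * Real.exp (-1) = 1 := by rw [← Real.exp_add]; norm_num
    have haa : a * ((a⁻¹) ^ ((1:ℝ)/2)) ^ 2 = 1 := by
      rw [hsq]; exact mul_inv_cancel₀ ha0.ne'
    have heval : Real.exp 1 * (2 * a) * (Real.exp (-1) * (2 * (a⁻¹) ^ ((1:ℝ)/2))) ^ 2
        = 8 * Real.exp (-1) := by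
      calc Real.exp 1 * (2 * a) * (Real.exp (-1) * (2 * (a⁻¹) ^ ((1:ℝ)/2))) ^ 2
          = (Real.exp 1 * Real.exp (-1)) * (a * ((a⁻¹) ^ ((1:ℝ)/2)) ^ 2)
            * (8 * Real.exp (-1)) := by ring
        _ = 8 * Real.exp (-1) := by rw [hee, haa]; ring
    have he8 : Real.exp 1 ≤ 8 := by
      have := Real.exp_one_lt_d9
      linarith
    have h18 : 1 ≤ 8 * Real.exp (-1) := by
      rw [Real.exp_neg, ← div_eq_mul_inv, le_div_iff₀ hepos]
      linarith
    calc (1:ℝ) ≤ 8 * Real.exp (-1) := h18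
      _ = Real.exp 1 * (2 * a) * (Real.exp (-1) * (2 * (a⁻¹) ^ ((1:ℝ)/2))) ^ 2 := heval.symm
      _ ≤ Real.exp 1 * (2 * a) * B ^ 2 := by
          apply mul_le_mul_of_nonneg_left hBsq
          positivity
      _ = Real.exp 1 * ((n:ℝ) - 1) * B ^ 2 := by rw [h2a]
  -- upper bound for the tail
  have htail : (∫ t in c..1, t ^ (a - 1) * (1 - t) ^ (-(1/2) : ℝ)) ≤ 2 * x := by
    have hmono : (∫ t in c..1, t ^ (a - 1) * (1 - t) ^ (-(1/2) : ℝ))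
        ≤ ∫ t in c..1, (1 - t) ^ (-(1/2) : ℝ) := by
      apply integral_mono_on hc1 (hsub c 1 hc0 hc1 zero_le_one le_rfl)
        (hgsub c 1 hc0 hc1 zero_le_one le_rfl)
      intro t ht
      have h2 : 0 ≤ (1 - t) ^ (-(1/2) : ℝ) := Real.rpow_nonneg (by linarith [ht.2]) _
      have h3 : t ^ (a - 1) ≤ 1 := Real.rpow_le_one (hc0.trans ht.1) ht.2 (by linarith)
      nlinarith
    rw [g_integral c] at hmono
    have h1c : 1 - c = x ^ 2 := by rw [hc_def]; ring
    have hxp : ((x ^ 2 : ℝ)) ^ ((1:ℝ)/2) = x := by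
      rw [← Real.rpow_natCast x 2, ← Real.rpow_mul hx0]
      norm_num
    rw [h1c, hxp] at hmono
    exact hmono
  -- finish
  have hrw : 1 - (∫ t in (0:ℝ)..c, t ^ (a - 1) * (1 - t) ^ (-(1/2) : ℝ)) / B
      = (∫ t in c..1, t ^ (a - 1) * (1 - t) ^ (-(1/2) : ℝ)) / B := by
    field_simp
    linarith [hsplit]
  rw [hrw]
  calc (∫ t in c..1, t ^ (a - 1) * (1 - t) ^ (-(1/2) : ℝ)) / B
      ≤ (2 * x) / B := by gcongr
    _ ≤ 2 * Real.exp 1 * ((n:ℝ) - 1) * x * B := by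
        rw [div_le_iff₀ hB0]
        nlinarith [mul_nonneg hx0 (sub_nonneg.2 key)]
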